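/- arXiv:2510.26079 — 2 statements merged into one kernel-verified Lean document; each statement's English description precedes it below -/
import Mathlib

section
/- Let m and e be integers with e < 0. Then the tetrahedral index satisfies I_Δ(m,e) = (u^{m·e}/(q^{e};q)_{-e}) · Σ_{n=0}^{∞} (-1)^n q^{n(n-1)/2 + n(1-e-m)} / ((q;q)_n · (q^{-e+1};q)_n), where the series on the right converges absolutely and (q^{e};q)_{-e} = ∏_{i=0}^{-e-1}(1 - q^{e+i}) is nonzero. (This identifies I_Δ(m,e) with q^{me/2}/(q^{e};q)_{-e} times the basic hypergeometric series ₁φ₁(0; q^{-e+1}; q, q^{1-e-m}).) -/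
open scoped BigOperators

/-- Finite q-Pochhammer symbol `(a;q)_n = ∏_{i=0}^{n-1} (1 - a q^i)`. -/
noncomputable def qPoch (a q : ℂ) (n : ℕ) : ℂ :=
  ∏ i ∈ Finset.range n, (1 - a * q ^ i)

/-- Infinite q-Pochhammer symbol `(a;q)_∞ = ∏_{i=0}^{∞} (1 - a q^i)`. -/
noncomputable def qPochInf (a q : ℂ) : ℂ :=
  ∏' i : ℕ, (1 - a * q ^ i)

/-- The `n`-th term of the series defining the tetrahedral index `I_Δ(m,e)`,
with `q = u^2` and vanishing below `e₊ = max(-e,0)`. -/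
noncomputable def tetTerm (u : ℂ) (m e : ℤ) (n : ℕ) : ℂ :=
  if (-e).toNat ≤ n then
    (-1 : ℂ) ^ n * u ^ ((n : ℤ) * ((n : ℤ) + 1) - (2 * (n : ℤ) + e) * m) /
      (qPoch (u ^ 2) (u ^ 2) n * qPoch (u ^ 2) (u ^ 2) ((n : ℤ) + e).toNat)
  else 0

/-- The tetrahedral index `I_Δ(m,e) = Σ_{n=e₊}^∞ (-1)^n u^{n(n+1)-(2n+e)m}/((q;q)_n (q;q)_{n+e})`. -/
noncomputable def tetIndex (u : ℂ) (m e : ℤ) : ℂ := ∑' n : ℕ, tetTerm u m e n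

lemma qPoch_ne_zero' {a q : ℂ} (ha : ‖a‖ < 1) (hq : ‖q‖ ≤ 1) (n : ℕ) : qPoch a q n ≠ 0 := by
  unfold qPoch
  rw [Finset.prod_ne_zero_iff]
  intro i _
  rw [sub_ne_zero]
  intro h
  have h1 : ‖a * q ^ i‖ < 1 := by
    rw [norm_mul, norm_pow]
    calc ‖a‖ * ‖q‖ ^ i ≤ ‖a‖ * 1 :=
          mul_le_mul_of_nonneg_left (pow_le_one₀ (norm_nonneg q) hq) (norm_nonneg a)
      _ < 1 := by simpa using ha
  rw [← h] at h1
  simp at h1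

lemma twoS (E : ℕ) : 2 * (∑ i ∈ Finset.range E, ((i : ℤ) + 1)) = E * (E + 1) := by
  induction E with
  | zero => simp
  | succ n ih =>
    rw [Finset.sum_range_succ]
    push_cast
    push_cast at ih
    linear_combination ih

lemma two_tri (n : ℕ) : 2 * ((n * (n - 1) / 2 : ℕ) : ℤ) = (n : ℤ) * ((n : ℤ) - 1) := by
  cases n with
  | zero => norm_num
  | succ k =>
    have hev : 2 ∣ (k + 1) * ((k + 1) - 1) := by
      simpa [Nat.succ_sub_one, mul_comm] using (Nat.even_mul_succ_self k).two_dvd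
    have h := Nat.div_mul_cancel hev
    have h' : (((k + 1) * ((k + 1) - 1) / 2 : ℕ) : ℤ) * 2 = (((k + 1) * ((k + 1) - 1) : ℕ) : ℤ) := by
      exact_mod_cast h
    push_cast [Nat.succ_sub_one] at h' ⊢
    linarith

lemma neg_poch (q : ℂ) (hq0 : q ≠ 0) (E : ℕ) :
    (∏ i ∈ Finset.range E, (1 - q ^ ((i : ℤ) - E))) *
      q ^ (∑ i ∈ Finset.range E, ((i : ℤ) + 1)) =
    (-1) ^ E * qPoch q q E := by
  induction E with
  | zero => simp [qPoch]
  | succ n ih =>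
    have hprod : ∏ i ∈ Finset.range (n + 1), (1 - q ^ ((i : ℤ) - ((n + 1 : ℕ) : ℤ))) =
        (∏ i ∈ Finset.range n, (1 - q ^ ((i : ℤ) - (n : ℤ)))) * (1 - q ^ (0 - ((n : ℤ) + 1))) := by
      rw [Finset.prod_range_succ']
      congr 1
      refine Finset.prod_congr rfl fun i _ => ?_
      rw [show ((i + 1 : ℕ) : ℤ) - ((n + 1 : ℕ) : ℤ) = (i : ℤ) - (n : ℤ) by push_cast; ring]
    have hqp : qPoch q q (n + 1) = qPoch q q n * (1 - q * q ^ n) := by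
      unfold qPoch; rw [Finset.prod_range_succ]
    have h1 : (1 - q ^ (0 - ((n : ℤ) + 1))) * q ^ ((n : ℤ) + 1) = -(1 - q * q ^ n) := by
      have hz : q ^ ((n : ℤ) + 1) ≠ 0 := zpow_ne_zero _ hq0
      have h2 : q ^ ((n : ℤ) + 1) = q * q ^ n := by
        rw [show ((n : ℤ) + 1) = ((n + 1 : ℕ) : ℤ) by push_cast; ring, zpow_natCast, pow_succ]
        ring
      rw [zero_sub, zpow_neg, ← h2]
      field_simp
      ring
    rw [hprod, Finset.sum_range_succ, zpow_add₀ hq0, hqp]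
    calc ((∏ i ∈ Finset.range n, (1 - q ^ ((i : ℤ) - (n : ℤ)))) * (1 - q ^ (0 - ((n : ℤ) + 1)))) *
          (q ^ (∑ i ∈ Finset.range n, ((i : ℤ) + 1)) * q ^ ((n : ℤ) + 1))
        = ((∏ i ∈ Finset.range n, (1 - q ^ ((i : ℤ) - (n : ℤ)))) *
            q ^ (∑ i ∈ Finset.range n, ((i : ℤ) + 1))) *
          ((1 - q ^ (0 - ((n : ℤ) + 1))) * q ^ ((n : ℤ) + 1)) := by ring
      _ = ((-1) ^ n * qPoch q q n) * (-(1 - q * q ^ n)) := by rw [ih, h1]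
      _ = (-1) ^ (n + 1) * (qPoch q q n * (1 - q * q ^ n)) := by ring

/-- for `e < 0`, `I_Δ(m,e)` equals `u^{me}/(q^e;q)_{-e}` times the absolutely
convergent series `Σ_n (-1)^n q^{n(n-1)/2 + n(1-e-m)}/((q;q)_n (q^{-e+1};q)_n)`,
with `(q^e;q)_{-e} ≠ 0`. -/
theorem stmt_1 (u : ℂ) (hu0 : 0 < ‖u‖) (hu1 : ‖u‖ < 1) (q : ℂ) (hq : q = u ^ 2)
    (m e : ℤ) (he : e < 0) :
    Summable (fun n : ℕ =>
      ‖(-1 : ℂ) ^ n * q ^ (((n * (n - 1) / 2 : ℕ) : ℤ) + (n : ℤ) * (1 - e - m)) /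
        (qPoch q q n * qPoch (q ^ (-e + 1)) q n)‖) ∧
    qPoch (q ^ e) q (-e).toNat ≠ 0 ∧
    tetIndex u m e =
      u ^ (m * e) / qPoch (q ^ e) q (-e).toNat *
        ∑' n : ℕ, (-1 : ℂ) ^ n * q ^ (((n * (n - 1) / 2 : ℕ) : ℤ) + (n : ℤ) * (1 - e - m)) /
          (qPoch q q n * qPoch (q ^ (-e + 1)) q n) := by
  have hu : u ≠ 0 := norm_pos_iff.mp hu0
  have hq0 : q ≠ 0 := by rw [hq]; exact pow_ne_zero _ hu
  have hqn : ‖q‖ < 1 := by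
    rw [hq, norm_pow]
    nlinarith
  have hqpos : 0 < ‖q‖ := norm_pos_iff.mpr hq0
  set E : ℕ := (-e).toNat with hEdef
  have hE : (E : ℤ) = -e := Int.toNat_of_nonneg (by omega)
  have hE1 : (-e + 1 : ℤ) = ((E + 1 : ℕ) : ℤ) := by push_cast; omega
  have hb : ‖q ^ (-e + 1 : ℤ)‖ < 1 := by
    rw [hE1, zpow_natCast, norm_pow]
    exact pow_lt_one₀ (norm_nonneg q) hqn (Nat.succ_ne_zero E)
  have hP : ∀ n, qPoch q q n ≠ 0 := fun n => qPoch_ne_zero' hqn hqn.le n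
  have hQ : ∀ n, qPoch (q ^ (-e + 1)) q n ≠ 0 := fun n => qPoch_ne_zero' hb hqn.le n
  set r : ℕ → ℂ := fun n =>
    (-1 : ℂ) ^ n * q ^ (((n * (n - 1) / 2 : ℕ) : ℤ) + (n : ℤ) * (1 - e - m)) /
      (qPoch q q n * qPoch (q ^ (-e + 1)) q n) with hr
  -- nonvanishing of (q^e;q)_E
  have hD : qPoch (q ^ e) q E ≠ 0 := by
    unfold qPoch
    rw [Finset.prod_ne_zero_iff]
    intro i hi
    rw [Finset.mem_range] at hi
    rw [sub_ne_zero]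
    intro h
    have h2 : q ^ e * q ^ i = q ^ (e + (i : ℤ)) := by
      rw [← zpow_natCast q i, ← zpow_add₀ hq0]
    rw [h2] at h
    have h3 : ‖q‖ ^ (e + (i : ℤ)) = 1 := by
      rw [← norm_zpow, ← h]; simp
    have hneg : e + (i : ℤ) < 0 := by omega
    have h4 : 1 < ‖q‖ ^ (e + (i : ℤ)) := one_lt_zpow_of_neg₀ hqpos hqn hneg
    rw [h3] at h4; exact lt_irrefl 1 h4
  -- exponent recursion
  have hA : ∀ n : ℕ, (((n + 1) * (n + 1 - 1) / 2 : ℕ) : ℤ) + ((n + 1 : ℕ) : ℤ) * (1 - e - m) =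
      ((((n * (n - 1) / 2 : ℕ)) : ℤ) + (n : ℤ) * (1 - e - m)) + ((n : ℤ) + 1 - e - m) := by
    intro n
    rw [Nat.triangle_succ]
    push_cast
    ring
  have hnorm : ∀ n : ℕ, ‖r n‖ =
      ‖q‖ ^ (((n * (n - 1) / 2 : ℕ) : ℤ) + (n : ℤ) * (1 - e - m)) /
        (‖qPoch q q n‖ * ‖qPoch (q ^ (-e + 1)) q n‖) := by
    intro n
    rw [hr]
    simp [norm_div, norm_mul, norm_zpow]
  have hqone : (0:ℝ) < 1 - ‖q‖ := by linarith
  have hsum_norm : Summable (fun n => ‖r n‖) := by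
    apply summable_of_ratio_norm_eventually_le (r := 1/2) (by norm_num)
    have htend : Filter.Tendsto (fun n : ℕ => ‖q‖ ^ (1 - e - m) * ‖q‖ ^ n)
        Filter.atTop (nhds 0) := by
      have := (tendsto_pow_atTop_nhds_zero_of_lt_one hqpos.le hqn).const_mul
        (‖q‖ ^ (1 - e - m))
      simpa using this
    have hev : ∀ᶠ n : ℕ in Filter.atTop,
        ‖q‖ ^ (1 - e - m) * ‖q‖ ^ n < 1/2 * (1 - ‖q‖) * (1 - ‖q‖) := by
      apply htend.eventually_lt_const
      positivity
    filter_upwards [hev] with n hn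
    have hf1 : 1 - ‖q‖ ≤ ‖1 - q * q ^ n‖ := by
      have h6 := norm_sub_norm_le (1 : ℂ) (q * q ^ n)
      have h5 : ‖q * q ^ n‖ ≤ ‖q‖ := by
        rw [norm_mul, norm_pow]
        calc ‖q‖ * ‖q‖ ^ n ≤ ‖q‖ * 1 :=
            mul_le_mul_of_nonneg_left (pow_le_one₀ (norm_nonneg q) hqn.le) (norm_nonneg q)
          _ = ‖q‖ := mul_one _
      simp only [norm_one] at h6
      linarith
    have hf2 : 1 - ‖q‖ ≤ ‖1 - q ^ (-e + 1 : ℤ) * q ^ n‖ := by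
      have h6 := norm_sub_norm_le (1 : ℂ) (q ^ (-e + 1 : ℤ) * q ^ n)
      have h5 : ‖q ^ (-e + 1 : ℤ) * q ^ n‖ ≤ ‖q‖ := by
        rw [norm_mul, hE1, zpow_natCast, norm_pow, norm_pow, ← pow_add]
        calc ‖q‖ ^ (E + 1 + n) ≤ ‖q‖ ^ 1 :=
            pow_le_pow_of_le_one (norm_nonneg q) hqn.le (by omega)
          _ = ‖q‖ := pow_one _
      simp only [norm_one] at h6
      linarith
    have hPs : qPoch q q (n + 1) = qPoch q q n * (1 - q * q ^ n) := by
      unfold qPoch; rw [Finset.prod_range_succ]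
    have hQs : qPoch (q ^ (-e + 1)) q (n + 1) =
        qPoch (q ^ (-e + 1)) q n * (1 - q ^ (-e + 1 : ℤ) * q ^ n) := by
      unfold qPoch; rw [Finset.prod_range_succ]
    have hf1' : (0:ℝ) < ‖1 - q * q ^ n‖ := lt_of_lt_of_le hqone hf1
    have hf2' : (0:ℝ) < ‖1 - q ^ (-e + 1 : ℤ) * q ^ n‖ := lt_of_lt_of_le hqone hf2
    have hPn : (0:ℝ) < ‖qPoch q q n‖ := norm_pos_iff.mpr (hP n)
    have hQn : (0:ℝ) < ‖qPoch (q ^ (-e + 1)) q n‖ := norm_pos_iff.mpr (hQ n)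
    have hrn : ‖r (n + 1)‖ = ‖r n‖ *
        (‖q‖ ^ ((n : ℤ) + 1 - e - m) / (‖1 - q * q ^ n‖ * ‖1 - q ^ (-e + 1 : ℤ) * q ^ n‖)) := by
      rw [hnorm (n + 1), hnorm n, hPs, hQs, hA n,
        zpow_add₀ (ne_of_gt hqpos), norm_mul, norm_mul]
      field_simp
    rw [Real.norm_of_nonneg (norm_nonneg _), Real.norm_of_nonneg (norm_nonneg _), hrn]
    have hratio : ‖q‖ ^ ((n : ℤ) + 1 - e - m) /
        (‖1 - q * q ^ n‖ * ‖1 - q ^ (-e + 1 : ℤ) * q ^ n‖) ≤ 1/2 := by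
      have hnum : ‖q‖ ^ ((n : ℤ) + 1 - e - m) ≤ 1/2 * (1 - ‖q‖) * (1 - ‖q‖) := by
        have hx : ‖q‖ ^ ((n : ℤ) + 1 - e - m) = ‖q‖ ^ (1 - e - m) * ‖q‖ ^ n := by
          rw [← zpow_natCast ‖q‖ n, ← zpow_add₀ (ne_of_gt hqpos)]
          congr 1; ring
        rw [hx]
        calc ‖q‖ ^ (1 - e - m) * ‖q‖ ^ n = ‖q‖ ^ (1 - e - m) * ‖q‖ ^ n := rfl
          _ ≤ 1/2 * (1 - ‖q‖) * (1 - ‖q‖) := hn.le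
      have hden : (1 - ‖q‖) * (1 - ‖q‖) ≤ ‖1 - q * q ^ n‖ * ‖1 - q ^ (-e + 1 : ℤ) * q ^ n‖ :=
        mul_le_mul hf1 hf2 hqone.le (norm_nonneg _)
      calc ‖q‖ ^ ((n : ℤ) + 1 - e - m) /
            (‖1 - q * q ^ n‖ * ‖1 - q ^ (-e + 1 : ℤ) * q ^ n‖)
          ≤ (1/2 * (1 - ‖q‖) * (1 - ‖q‖)) / ((1 - ‖q‖) * (1 - ‖q‖)) :=
            div_le_div₀ (by positivity) hnum (by positivity) hden
        _ = 1/2 := by rw [div_eq_iff (ne_of_gt (mul_pos hqone hqone))]; ring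
    calc ‖r n‖ * (‖q‖ ^ ((n : ℤ) + 1 - e - m) /
          (‖1 - q * q ^ n‖ * ‖1 - q ^ (-e + 1 : ℤ) * q ^ n‖))
        ≤ ‖r n‖ * (1/2) := mul_le_mul_of_nonneg_left hratio (norm_nonneg _)
      _ = 1/2 * ‖r n‖ := by ring
  refine ⟨hsum_norm, hD, ?_⟩
  -- the term-by-term identity
  have hsum_r : Summable r := hsum_norm.of_norm
  have hq2 : (u ^ 2 : ℂ) = q := hq.symm
  have hpowq : ∀ z : ℤ, q ^ z = u ^ (2 * z) := by
    intro z
    rw [hq, ← zpow_natCast u 2, ← zpow_mul]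
    norm_num
  have hsplit : ∀ k : ℕ, qPoch q q (E + k) = qPoch q q E * qPoch (q ^ (-e + 1 : ℤ)) q k := by
    intro k
    unfold qPoch
    rw [Finset.prod_range_add]
    congr 1
    refine Finset.prod_congr rfl fun i _ => ?_
    congr 1
    rw [hE1, zpow_natCast, ← pow_add, ← pow_succ']
    congr 1
    omega
  have hDprod : qPoch (q ^ e) q E = ∏ i ∈ Finset.range E, (1 - q ^ ((i : ℤ) - (E : ℤ))) := by
    unfold qPoch
    refine Finset.prod_congr rfl fun i _ => ?_
    congr 1
    rw [← zpow_natCast q i, ← zpow_add₀ hq0]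
    congr 1
    omega
  have hneg := neg_poch q hq0 E
  set S : ℤ := ∑ i ∈ Finset.range E, ((i : ℤ) + 1) with hS
  have h2S := twoS E
  rw [← hS] at h2S
  have hsq : ((-1 : ℂ)) ^ E * ((-1 : ℂ)) ^ E = 1 := by
    rw [← mul_pow]; norm_num
  have hEq : qPoch q q E = (-1 : ℂ) ^ E * (qPoch (q ^ e) q E * q ^ S) := by
    calc qPoch q q E = ((-1 : ℂ)) ^ E * (((-1 : ℂ)) ^ E * qPoch q q E) := by
          rw [← mul_assoc, hsq, one_mul]
      _ = ((-1 : ℂ)) ^ E *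
          ((∏ i ∈ Finset.range E, (1 - q ^ ((i : ℤ) - (E : ℤ)))) * q ^ S) := by rw [← hneg]
      _ = (-1 : ℂ) ^ E * (qPoch (q ^ e) q E * q ^ S) := by rw [← hDprod]
  have key : ∀ n : ℕ, tetTerm u m e (n + E) =
      u ^ (m * e) / qPoch (q ^ e) q E * r n := by
    intro n
    unfold tetTerm
    rw [← hEdef]
    rw [Nat.add_comm n E]
    rw [if_pos (Nat.le_add_right E n)]
    have htn : (((E + n : ℕ) : ℤ) + e).toNat = n := by omega
    rw [htn, hq2, hsplit n, hEq]
    simp only [hr]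
    have h2c := two_tri n
    have hexp : ((E + n : ℕ) : ℤ) * (((E + n : ℕ) : ℤ) + 1) - (2 * ((E + n : ℕ) : ℤ) + e) * m =
        m * e + 2 * ((((n * (n - 1) / 2 : ℕ)) : ℤ) + (n : ℤ) * (1 - e - m)) + 2 * S := by
      simp only [Nat.cast_add]
      linear_combination (2 * (n : ℤ) - 2 * m) * hE - h2c - h2S
    rw [hexp, zpow_add₀ hu, zpow_add₀ hu, hpowq S,
      hpowq ((((n * (n - 1) / 2 : ℕ)) : ℤ) + (n : ℤ) * (1 - e - m))]
    have hqS : (u : ℂ) ^ (2 * S) ≠ 0 := zpow_ne_zero _ hu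
    have hme : (u : ℂ) ^ (m * e) ≠ 0 := zpow_ne_zero _ hu
    have hsgn : ((-1 : ℂ)) ^ E ≠ 0 := pow_ne_zero _ (by norm_num)
    field_simp [hD, hP n, hQ n]
    rw [pow_add]
  have hshift : (fun n => tetTerm u m e (n + E)) =
      fun n => u ^ (m * e) / qPoch (q ^ e) q E * r n := funext key
  have hsum_shift : Summable fun n => tetTerm u m e (n + E) := by
    rw [hshift]; exact hsum_r.mul_left _
  have hT : Summable (tetTerm u m e) := (summable_nat_add_iff E).mp hsum_shift
  have hzero : ∀ i ∈ Finset.range E, tetTerm u m e i = 0 := by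
    intro i hi
    rw [Finset.mem_range] at hi
    unfold tetTerm
    rw [← hEdef, if_neg (by omega)]
  calc tetIndex u m e = ∑' n, tetTerm u m e n := rfl
    _ = ∑ i ∈ Finset.range E, tetTerm u m e i + ∑' n, tetTerm u m e (n + E) :=
        (hT.sum_add_tsum_nat_add E).symm
    _ = ∑' n, tetTerm u m e (n + E) := by rw [Finset.sum_eq_zero hzero, zero_add]
    _ = ∑' n, (u ^ (m * e) / qPoch (q ^ e) q E * r n) := by rw [hshift]
    _ = u ^ (m * e) / qPoch (q ^ e) q E * ∑' n, r n := tsum_mul_left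
end

section
/- For all integers m and e, the tetrahedral index satisfies the symmetry I_Δ(m,e) = I_Δ(-e,-m). -/
open scoped BigOperators
open Filter

/-! Auxiliary development. -/

lemma choose_two_int (n : ℕ) : ((n.choose 2 : ℤ)) * 2 = n * (n - 1) := by
  induction n with
  | zero => simp
  | succ k ih =>
    have h : (k+1).choose 2 = k.choose 1 + k.choose 2 := Nat.choose_succ_succ k 1
    push_cast [h, Nat.choose_one_right]
    push_cast at ih
    ring_nf
    ring_nf at ih
    linarith

lemma choose_two_succ (m : ℕ) : (m+1).choose 2 = m.choose 2 + m := by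
  have h : (m+1).choose 2 = m.choose 1 + m.choose 2 := Nat.choose_succ_succ m 1
  simp [h, Nat.choose_one_right, Nat.add_comm]
  
lemma choose_two_nat (n : ℕ) : 2 * n.choose 2 = n * (n - 1) := by
  induction n with
  | zero => rfl
  | succ k ih =>
    rw [choose_two_succ, Nat.mul_add, ih]
    cases k with
    | zero => rfl
    | succ j => simp only [Nat.succ_sub_one]; ring

lemma qPoch_succ (a q : ℂ) (n : ℕ) :
    qPoch a q (n+1) = qPoch a q n * (1 - a * q ^ n) := Finset.prod_range_succ _ n

section Q
variable {q : ℂ} (hq1 : ‖q‖ < 1)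

include hq1

lemma factor_ne (i : ℕ) : (1 : ℂ) - q * q ^ i ≠ 0 := by
  intro h
  have h1 : q * q ^ i = 1 := by linear_combination -h
  have : ‖q * q ^ i‖ < 1 := by
    calc ‖q * q ^ i‖ = ‖q‖ * ‖q‖ ^ i := by rw [norm_mul, norm_pow]
    _ ≤ ‖q‖ * 1 := by
        refine mul_le_mul_of_nonneg_left ?_ (norm_nonneg q)
        exact pow_le_one₀ (norm_nonneg q) hq1.le
    _ < 1 := by simpa using hq1
  rw [h1] at this; simp at this

lemma qPoch_ne (n : ℕ) : qPoch q q n ≠ 0 := by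
  rw [qPoch]
  exact Finset.prod_ne_zero_iff.2 fun i _ => factor_ne hq1 i

/-- Uniform positive lower bound for `‖(q;q)_n‖`. -/
lemma qPoch_lower : ∃ c > 0, ∀ n, c ≤ ‖qPoch q q n‖ := by
  set t := ‖q‖ with ht
  have ht0 : 0 ≤ t := norm_nonneg q
  -- ∀ n, ∏_{i<n} (1 - t^{i+1}) ≤ ‖qPoch q q n‖
  have hfac : ∀ i : ℕ, 0 ≤ 1 - t ^ (i+1) := by
    intro i
    have : t ^ (i+1) ≤ 1 := pow_le_one₀ ht0 hq1.le
    linarith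
  have key : ∀ n, (∏ i ∈ Finset.range n, (1 - t ^ (i+1))) ≤ ‖qPoch q q n‖ := by
    intro n
    rw [qPoch, norm_prod]
    refine Finset.prod_le_prod (fun i _ => hfac i) (fun i _ => ?_)
    have h1 : ‖q * q ^ i‖ = t ^ (i+1) := by
      rw [norm_mul, norm_pow, pow_succ, mul_comm]
    calc 1 - t ^ (i+1) = 1 - ‖q * q ^ i‖ := by rw [h1]
    _ ≤ ‖1 - q * q ^ i‖ := by
        have := norm_sub_norm_le (1 : ℂ) (q * q ^ i)
        simpa using this
  -- choose N with tail sum ≤ 1/2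
  have h1t : (0:ℝ) < 1 - t := by linarith
  obtain ⟨N, hN⟩ : ∃ N, t ^ (N+1) * (1 - t)⁻¹ ≤ 1/2 := by
    obtain ⟨k, hk⟩ := exists_pow_lt_of_lt_one
      (x := (1/2) * (1 - t)) (by positivity) hq1
    refine ⟨k, ?_⟩
    have hk2 : t ^ (k+1) ≤ t ^ k := pow_le_pow_of_le_one ht0 hq1.le (by omega)
    have h1t' : (0:ℝ) < (1 - t)⁻¹ := by positivity
    calc t ^ (k+1) * (1-t)⁻¹ ≤ ((1/2) * (1-t)) * (1-t)⁻¹ :=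
          mul_le_mul_of_nonneg_right (le_trans hk2 hk.le) h1t'.le
    _ = 1/2 := by field_simp
  -- prod over range ≥ 1 - sum
  have prod_ge : ∀ (s : Finset ℕ) (f : ℕ → ℝ), (∀ i, 0 ≤ f i) → (∀ i, f i ≤ 1) →
      1 - (∑ i ∈ s, f i) ≤ ∏ i ∈ s, (1 - f i) := by
    intro s f h0 h1
    classical
    induction s using Finset.induction_on with
    | empty => simp
    | insert _ _ hx =>
      rename_i a s' ih
      rw [Finset.prod_insert hx, Finset.sum_insert hx]
      have hps : 0 ≤ ∏ i ∈ s', (1 - f i) :=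
        Finset.prod_nonneg fun i _ => by linarith [h1 i]
      nlinarith [h0 a, h1 a, ih, Finset.sum_nonneg (fun i (_ : i ∈ s') => h0 i)]
  set P : ℝ := ∏ i ∈ Finset.range N, (1 - t ^ (i+1)) with hP
  have hPpos : 0 < P := by
    rw [hP]
    refine Finset.prod_pos fun i _ => ?_
    have : t ^ (i+1) < 1 := by
      calc t ^ (i+1) ≤ t := by
            simpa using pow_le_pow_of_le_one ht0 hq1.le (Nat.one_le_iff_ne_zero.2 (by omega))
      _ < 1 := hq1
    linarith
  refine ⟨P * (1/2), by positivity, fun n => ?_⟩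
  refine le_trans ?_ (key n)
  rcases le_or_gt n N with h | h
  · -- P ≤ prod up to n since extra factors ≤ 1
    have : P ≤ ∏ i ∈ Finset.range n, (1 - t ^ (i+1)) := by
      obtain ⟨k, rfl⟩ := Nat.exists_eq_add_of_le h
      rw [hP, Finset.prod_range_add]
      have h2 : (∏ i ∈ Finset.range k, (1 - t ^ (n+i+1))) ≤ 1 := by
        refine Finset.prod_le_one (fun i _ => hfac _) (fun i _ => by
          have : 0 ≤ t ^ (n+i+1) := by positivity
          linarith)
      nlinarith [Finset.prod_nonneg (fun i (_ : i ∈ Finset.range n) => hfac i)]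
    nlinarith
  · obtain ⟨k, rfl⟩ := Nat.exists_eq_add_of_le h.le
    rw [Finset.prod_range_add, ← hP]
    have hsum : (∑ i ∈ Finset.range k, t ^ (N+i+1)) ≤ 1/2 := by
      calc (∑ i ∈ Finset.range k, t ^ (N+i+1))
          = t ^ (N+1) * ∑ i ∈ Finset.range k, t ^ i := by
            rw [Finset.mul_sum]; congr 1; funext i; rw [← pow_add]; ring_nf
      _ ≤ t ^ (N+1) * (1-t)⁻¹ := by
            refine mul_le_mul_of_nonneg_left ?_ (by positivity)
            have hsummable : Summable (fun i => t ^ i) := summable_geometric_of_lt_one ht0 hq1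
            calc (∑ i ∈ Finset.range k, t ^ i) ≤ ∑' i, t ^ i :=
                  Summable.sum_le_tsum _ (fun i _ => by positivity) hsummable
            _ = (1-t)⁻¹ := tsum_geometric_of_lt_one ht0 hq1
      _ ≤ 1/2 := hN
    have h2 : 1 - (∑ i ∈ Finset.range k, t ^ (N+i+1)) ≤
        ∏ i ∈ Finset.range k, (1 - t ^ (N+i+1)) := by
      refine prod_ge _ _ (fun i => by positivity) (fun i => ?_)
      have : t ^ (N+i+1) ≤ 1 := pow_le_one₀ ht0 hq1.le
      linarith
    have h3 : (1:ℝ)/2 ≤ ∏ i ∈ Finset.range k, (1 - t ^ (N+i+1)) := by linarith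
    nlinarith

end Q

/-- Term of the Euler series `(x;q)_∞ = Σ (-1)^n q^(C(n,2)) x^n / (q;q)_n`. -/
noncomputable def Eterm (q z : ℂ) (n : ℕ) : ℂ :=
  (-1)^n * q^(n.choose 2) * z^n / qPoch q q n

/-- The Euler series. -/
noncomputable def Efun (q z : ℂ) : ℂ := ∑' n : ℕ, Eterm q z n

section Q2
variable {q : ℂ} (hq1 : ‖q‖ < 1)
include hq1

lemma Eterm_norm_summable (z : ℂ) : Summable (fun n => ‖Eterm q z n‖) := by
  obtain ⟨c, hc, hcb⟩ := qPoch_lower hq1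
  set t := ‖q‖ with ht
  have ht0 : 0 ≤ t := norm_nonneg q
  -- choose K with t^K * ‖z‖ ≤ 1/4
  obtain ⟨K, hK⟩ : ∃ K, t ^ K * ‖z‖ ≤ 1/4 := by
    rcases eq_or_lt_of_le (norm_nonneg z) with h0 | h0
    · exact ⟨0, by rw [← h0]; norm_num⟩
    · obtain ⟨k, hk⟩ := exists_pow_lt_of_lt_one (x := (1/4) / ‖z‖) (by positivity) hq1
      refine ⟨k, ?_⟩
      rw [← le_div_iff₀ h0]
      exact hk.le
  refine Summable.of_norm_bounded_eventually_nat (g := fun n => (1/2 : ℝ)^n)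
    (summable_geometric_of_lt_one (by norm_num) (by norm_num)) ?_
  -- eventually: n ≥ 2K+1 and 2^n ≥ 1/c
  obtain ⟨M, hM⟩ : ∃ M : ℕ, c⁻¹ ≤ 2 ^ M := pow_unbounded_of_one_lt _ one_lt_two |>.imp
    (fun M h => h.le)
  filter_upwards [Filter.eventually_ge_atTop (2*K+1), Filter.eventually_ge_atTop M]
    with n hn hnM
  have hnorm : ‖‖Eterm q z n‖‖ = ‖Eterm q z n‖ := by
    rw [Real.norm_eq_abs, abs_of_nonneg (norm_nonneg _)]
  rw [hnorm, Eterm]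
  have hb : ‖(-1:ℂ)^n * q^(n.choose 2) * z^n / qPoch q q n‖
      = t^(n.choose 2) * ‖z‖^n / ‖qPoch q q n‖ := by
    rw [norm_div, norm_mul, norm_mul, norm_pow, norm_pow, norm_pow]
    simp [ht]
  rw [hb]
  have hcn : c ≤ ‖qPoch q q n‖ := hcb n
  have hn2 : K * n ≤ n.choose 2 := by
    have h2 : 2 * n.choose 2 = n * (n-1) := choose_two_nat n
    have h3 : 2*K*n ≤ (n-1)*n := Nat.mul_le_mul_right n (by omega)
    nlinarith [h2, h3]
  have step1 : t^(n.choose 2) * ‖z‖^n ≤ (1/4)^n := by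
    calc t^(n.choose 2) * ‖z‖^n ≤ t^(K*n) * ‖z‖^n := by
          refine mul_le_mul_of_nonneg_right ?_ (by positivity)
          exact pow_le_pow_of_le_one ht0 hq1.le hn2
    _ = (t^K * ‖z‖)^n := by rw [mul_pow, pow_mul]
    _ ≤ (1/4)^n := by
          refine pow_le_pow_left₀ ?_ hK n
          positivity
  have step2 : t^(n.choose 2) * ‖z‖^n / ‖qPoch q q n‖ ≤ (1/4)^n / c :=
    div_le_div₀ (by positivity) step1 hc hcn
  have hcinv : c⁻¹ ≤ 2^n := hM.trans (pow_le_pow_right₀ one_le_two hnM)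
  calc t^(n.choose 2) * ‖z‖^n / ‖qPoch q q n‖ ≤ (1/4)^n / c := step2
  _ = (1/4)^n * c⁻¹ := div_eq_mul_inv _ _
  _ ≤ (1/4)^n * 2^n := mul_le_mul_of_nonneg_left hcinv (by positivity)
  _ = (1/2)^n := by rw [← mul_pow]; norm_num

end Q2

section Q3
variable {q : ℂ} (hq1 : ‖q‖ < 1)
include hq1

lemma Eterm_summable (z : ℂ) : Summable (Eterm q z) :=
  (Eterm_norm_summable hq1 z).of_norm

/-- Functional equation `E(x) = (1-x) E(qx)`. -/
lemma Efun_FE (x : ℂ) : Efun q x = (1 - x) * Efun q (q * x) := by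
  have hx := Eterm_summable hq1 x
  have hqx := Eterm_summable hq1 (q * x)
  have hterm : ∀ m : ℕ, Eterm q x (m+1) - Eterm q (q*x) (m+1) = -x * Eterm q (q*x) m := by
    intro m
    rw [Eterm, Eterm, Eterm, qPoch_succ, choose_two_succ, pow_add, pow_add]
    have h1 : qPoch q q m ≠ 0 := qPoch_ne hq1 m
    have h2 : (1 : ℂ) - q * q ^ m ≠ 0 := factor_ne hq1 m
    field_simp
    linear_combination (-(q ^ m.choose 2 * q ^ m * x * x ^ m)) * mul_inv_cancel₀ h2
  have hdiff : Efun q x - Efun q (q*x) = ∑' m : ℕ, (Eterm q x m - Eterm q (q*x) m) :=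
    (Summable.tsum_sub hx hqx).symm
  have hsub : Summable (fun m => Eterm q x m - Eterm q (q*x) m) := hx.sub hqx
  have hshift : (∑' m : ℕ, (Eterm q x m - Eterm q (q*x) m))
      = (Eterm q x 0 - Eterm q (q*x) 0) + ∑' m : ℕ, (Eterm q x (m+1) - Eterm q (q*x) (m+1)) :=
    Summable.tsum_eq_zero_add hsub
  have h0 : Eterm q x 0 - Eterm q (q*x) 0 = 0 := by simp [Eterm]
  have htail : (∑' m : ℕ, (Eterm q x (m+1) - Eterm q (q*x) (m+1)))
      = -x * Efun q (q*x) := by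
    rw [tsum_congr hterm, tsum_mul_left, Efun]
  have : Efun q x - Efun q (q*x) = -x * Efun q (q*x) := by
    rw [hdiff, hshift, h0, htail, zero_add]
  linear_combination this

lemma Efun_zpow_nonpos (hq0 : q ≠ 0) : ∀ j : ℤ, j ≤ 0 → Efun q (q ^ j) = 0 := by
  have h1 : Efun q 1 = 0 := by
    have := Efun_FE hq1 1
    simpa using this
  intro j hj
  obtain ⟨k, rfl⟩ : ∃ k : ℕ, j = -(k : ℤ) := ⟨(-j).toNat, by omega⟩
  clear hj
  induction k with
  | zero => simpa using h1
  | succ i ih =>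
    have hfe := Efun_FE hq1 (q ^ (-(i+1 : ℕ) : ℤ))
    have harg : q * q ^ (-(i+1 : ℕ) : ℤ) = q ^ (-(i : ℕ) : ℤ) := by
      have h2 : (-(i:ℤ)) = (-(i+1 : ℕ) : ℤ) + 1 := by push_cast; ring
      rw [h2, zpow_add_one₀ hq0, mul_comm]
    rw [harg, ih] at hfe
    simpa using hfe

lemma Efun_q_peel (hq0 : q ≠ 0) (N : ℕ) : Efun q q = qPoch q q N * Efun q (q ^ (N+1)) := by
  induction N with
  | zero => simp [qPoch, pow_one]
  | succ i ih =>
    rw [ih, qPoch_succ]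
    have hfe := Efun_FE hq1 (q ^ (i+1))
    have harg : q * q ^ (i+1) = q ^ (i+2) := by ring
    rw [harg] at hfe
    rw [hfe]
    ring

lemma Efun_q_ne (hq0 : q ≠ 0) : Efun q q ≠ 0 := by
  obtain ⟨c, hc, hcb⟩ := qPoch_lower hq1
  -- smallness: if ‖z‖ ≤ 1/2 and ‖z‖ ≤ c/4 then Efun q z ≠ 0
  have small : ∀ z : ℂ, ‖z‖ ≤ 1/2 → ‖z‖ ≤ c/8 → Efun q z ≠ 0 := by
    intro z hz1 hz2
    have hsum := Eterm_summable hq1 z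
    have hnsum := Eterm_norm_summable hq1 z
    have h0 : Eterm q z 0 = 1 := by simp [Eterm, qPoch]
    have hsplit : Efun q z = 1 + ∑' m : ℕ, Eterm q z (m+1) := by
      rw [Efun, Summable.tsum_eq_zero_add hsum, h0]
    have htail_b : ∀ m : ℕ, ‖Eterm q z (m+1)‖ ≤ (2/c) * ‖z‖ * (1/2)^m := by
      intro m
      rw [Eterm]
      have hb : ‖(-1:ℂ)^(m+1) * q^((m+1).choose 2) * z^(m+1) / qPoch q q (m+1)‖
          = ‖q‖^((m+1).choose 2) * ‖z‖^(m+1) / ‖qPoch q q (m+1)‖ := by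
        rw [norm_div, norm_mul, norm_mul, norm_pow, norm_pow, norm_pow]
        simp
      rw [hb]
      have hq1' : ‖q‖^((m+1).choose 2) ≤ 1 := pow_le_one₀ (norm_nonneg q) hq1.le
      have hzm : ‖z‖^(m+1) ≤ ‖z‖ * (1/2)^m := by
        rw [pow_succ, mul_comm]
        refine mul_le_mul_of_nonneg_left ?_ (norm_nonneg z)
        exact pow_le_pow_left₀ (norm_nonneg z) hz1 m
      have hden : c ≤ ‖qPoch q q (m+1)‖ := hcb _
      calc ‖q‖^((m+1).choose 2) * ‖z‖^(m+1) / ‖qPoch q q (m+1)‖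
          ≤ 1 * (‖z‖ * (1/2)^m) / c := by
            refine div_le_div₀ (by positivity) ?_ hc hden
            exact mul_le_mul hq1' hzm (by positivity) (by norm_num)
      _ = (2/c) * ‖z‖ * (1/2)^m * (1/2) := by field_simp
      _ ≤ (2/c) * ‖z‖ * (1/2)^m := by
            have hx : (0:ℝ) ≤ (2/c) * ‖z‖ * (1/2)^m := by positivity
            linarith
    have hgeom : Summable (fun m : ℕ => (2/c) * ‖z‖ * (1/2)^m) :=
      ((summable_geometric_of_lt_one (by norm_num) (by norm_num)).mul_left _)
    have htail : ‖∑' m : ℕ, Eterm q z (m+1)‖ ≤ (2/c) * ‖z‖ * 2 := by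
      calc ‖∑' m : ℕ, Eterm q z (m+1)‖ ≤ ∑' m : ℕ, ‖Eterm q z (m+1)‖ :=
            norm_tsum_le_tsum_norm (hnsum.comp_injective (add_left_injective 1))
      _ ≤ ∑' m : ℕ, (2/c) * ‖z‖ * (1/2)^m := by
            refine Summable.tsum_le_tsum htail_b (hnsum.comp_injective (add_left_injective 1)) hgeom
      _ = (2/c) * ‖z‖ * 2 := by
            rw [tsum_mul_left, tsum_geometric_of_lt_one (by norm_num) (by norm_num)]
            norm_num
    have hlt : ‖∑' m : ℕ, Eterm q z (m+1)‖ < 1 := by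
      have hhalf : (2/c) * ‖z‖ * 2 ≤ 1/2 := by
        rw [div_mul_eq_mul_div, div_mul_eq_mul_div, div_le_div_iff₀ hc (by norm_num)]
        nlinarith
      linarith
    intro hzero
    rw [hsplit] at hzero
    have heq : (∑' m : ℕ, Eterm q z (m+1)) = -1 := by linear_combination hzero
    rw [heq] at hlt
    norm_num at hlt
  -- choose N with ‖q^(N+1)‖ small
  obtain ⟨k, hk⟩ := exists_pow_lt_of_lt_one (x := min (1/2) (c/8)) (by positivity) hq1
  have hsm : ‖q ^ (k+1)‖ ≤ min (1/2) (c/8) := by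
    rw [norm_pow]
    calc ‖q‖^(k+1) ≤ ‖q‖^k := pow_le_pow_of_le_one (norm_nonneg q) hq1.le (by omega)
    _ ≤ min (1/2) (c/8) := hk.le
  have := small (q ^ (k+1)) (hsm.trans (min_le_left _ _)) (hsm.trans (min_le_right _ _))
  rw [Efun_q_peel hq1 hq0 k]
  exact mul_ne_zero (qPoch_ne hq1 k) this

end Q3

/-- Term of the symmetric double series. -/
noncomputable def Sterm (q z b : ℂ) (p : ℕ × ℕ) : ℂ :=
  Eterm q z p.1 * (Eterm q b p.2 * q ^ (p.1 * p.2))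

/-- The symmetric double series `S(z,b) = Σ_{n,m} (-1)^{n+m} q^(C(n+m,2)) z^n b^m /((q)_n (q)_m)`. -/
noncomputable def Sfun (q z b : ℂ) : ℂ := ∑' p : ℕ × ℕ, Sterm q z b p

section Q4
variable {q : ℂ} (hq1 : ‖q‖ < 1)
include hq1

set_option maxHeartbeats 1000000 in
lemma Sterm_summable (z b : ℂ) : Summable (Sterm q z b) := by
  have hz := Eterm_norm_summable hq1 z
  have hb := Eterm_norm_summable hq1 b
  refine Summable.of_norm_bounded (g := fun p : ℕ × ℕ => ‖Eterm q z p.1‖ * ‖Eterm q b p.2‖)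
    (hz.mul_of_nonneg hb (fun n => norm_nonneg _) (fun m => norm_nonneg _)) ?_
  intro p
  rw [Sterm, ← mul_assoc, norm_mul, norm_mul]
  have : ‖q ^ (p.1 * p.2)‖ ≤ 1 := by
    rw [norm_pow]; exact pow_le_one₀ (norm_nonneg q) hq1.le
  calc ‖Eterm q z p.1‖ * ‖Eterm q b p.2‖ * ‖q ^ (p.1 * p.2)‖
      ≤ ‖Eterm q z p.1‖ * ‖Eterm q b p.2‖ * 1 := by
        refine mul_le_mul_of_nonneg_left this (by positivity)
  _ = ‖Eterm q z p.1‖ * ‖Eterm q b p.2‖ := mul_one _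

/-- Symmetry of `S`. -/
lemma Sfun_comm (z b : ℂ) : Sfun q z b = Sfun q b z := by
  rw [Sfun, Sfun, ← (Equiv.prodComm ℕ ℕ).tsum_eq (Sterm q b z)]
  refine tsum_congr fun p => ?_
  simp only [Sterm, Equiv.prodComm_apply, Prod.fst_swap, Prod.snd_swap]
  ring_nf

/-- Fubini evaluation of `S` as an iterated sum. -/
lemma Sfun_eq (z b : ℂ) : Sfun q z b = ∑' n : ℕ, Eterm q z n * Efun q (b * q ^ n) := by
  have hsum := Sterm_summable hq1 z b
  rw [Sfun, Summable.tsum_prod' hsum (fun n => hsum.prod_factor n)]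
  refine tsum_congr fun n => ?_
  have hinner : ∀ m : ℕ, Sterm q z b (n, m) = Eterm q z n * Eterm q (b * q ^ n) m := by
    intro m
    have h3 : (b * q ^ n) ^ m = b ^ m * q ^ (n * m) := by
      rw [mul_pow, ← pow_mul]
    simp only [Sterm, Eterm, h3]
    ring
  rw [tsum_congr hinner, tsum_mul_left, Efun]

end Q4

lemma key_lemma (u : ℂ) (hu : u ≠ 0) (hu1 : ‖u‖ < 1) (m e : ℤ) :
    Efun (u^2) (u^2) * tetIndex u m e
      = u ^ (-(e*m)) * Sfun (u^2) ((u^2) ^ (1-m)) ((u^2) ^ (1+e)) := by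
  have hq1 : ‖u^2‖ < 1 := by
    rw [norm_pow]
    exact pow_lt_one₀ (norm_nonneg u) hu1 (by norm_num)
  have hq0 : (u^2 : ℂ) ≠ 0 := pow_ne_zero 2 hu
  rw [tetIndex, ← tsum_mul_left, Sfun_eq hq1, ← tsum_mul_left]
  refine tsum_congr fun n => ?_
  by_cases hn : (-e).toNat ≤ n
  · -- main case : n + e ≥ 0
    have hne : (0:ℤ) ≤ (n:ℤ) + e := by
      have := Int.toNat_le.mp hn
      omega
    set N : ℕ := ((n:ℤ) + e).toNat with hNdef
    have hN : (N:ℤ) = (n:ℤ) + e := Int.toNat_of_nonneg hne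
    have harg : (u^2) ^ ((1+e):ℤ) * (u^2) ^ n = (u^2) ^ (N+1) := by
      rw [← zpow_natCast (u^2) n, ← zpow_add₀ hq0, ← zpow_natCast (u^2) (N+1)]
      congr 1
      push_cast [hN]
      ring
    have hC := choose_two_int n
    have hexp : (n:ℤ)*((n:ℤ)+1) - (2*(n:ℤ)+e)*m
        = -(e*m) + (2*(n.choose 2 : ℤ)) + (2*(1-m))*(n:ℤ) := by
      linear_combination (-1 : ℤ) * hC
    have hCpow : ((u^2 : ℂ)) ^ (n.choose 2) = u ^ (2*((n.choose 2):ℤ)) := by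
      rw [← pow_mul]
      norm_cast
    have hw : ((u^2 : ℂ) ^ ((1-m):ℤ)) ^ n = u ^ ((2*(1-m))*(n:ℤ)) := by
      rw [← zpow_natCast ((u^2 : ℂ) ^ ((1-m):ℤ)) n, ← zpow_natCast u 2, ← zpow_mul, ← zpow_mul,
        mul_assoc]
      norm_cast
    have hpow : u ^ ((n:ℤ)*((n:ℤ)+1) - (2*(n:ℤ)+e)*m)
        = u ^ (-(e*m)) * (u^2) ^ (n.choose 2) * ((u^2) ^ ((1-m):ℤ)) ^ n := by
      rw [hexp, zpow_add₀ hu, zpow_add₀ hu, hCpow, hw]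
    rw [tetTerm, if_pos hn, Efun_q_peel hq1 hq0 N, harg, Eterm, hpow, ← hNdef]
    have hA : qPoch (u^2) (u^2) n ≠ 0 := qPoch_ne hq1 n
    have hB : qPoch (u^2) (u^2) N ≠ 0 := qPoch_ne hq1 N
    set A := qPoch (u^2) (u^2) n with hAdef
    set B := qPoch (u^2) (u^2) N with hBdef
    set E := Efun (u^2) ((u^2) ^ (N+1)) with hEdef
    set t := u ^ (-(e*m)) with htdef
    set C := (u^2) ^ (n.choose 2) with hCdef
    set w := ((u^2) ^ ((1-m):ℤ)) ^ n with hwdef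
    set s := ((-1 : ℂ)) ^ n with hsdef
    field_simp
  · -- vanishing case : n + e < 0
    rw [tetTerm, if_neg hn, mul_zero]
    have h2 : ¬ ((-e) ≤ (n:ℤ)) := fun hcon => hn (Int.toNat_le.mpr hcon)
    have hneg : (1 + e) + (n:ℤ) ≤ 0 := by omega
    have harg : (u^2) ^ ((1+e):ℤ) * (u^2) ^ n = (u^2) ^ ((1+e)+(n:ℤ)) := by
      rw [← zpow_natCast (u^2) n, ← zpow_add₀ hq0]
    rw [harg, Efun_zpow_nonpos hq1 hq0 _ hneg, mul_zero, mul_zero]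

/-- `I_Δ(m,e) = I_Δ(-e,-m)`. -/
theorem stmt_2 (u : ℂ) (hu0 : 0 < ‖u‖) (hu1 : ‖u‖ < 1) (m e : ℤ) :
    tetIndex u m e = tetIndex u (-e) (-m) := by
  have hu : u ≠ 0 := by
    intro h
    rw [h] at hu0
    simp at hu0
  have hq1 : ‖u^2‖ < 1 := by
    rw [norm_pow]
    exact pow_lt_one₀ (norm_nonneg u) hu1 (by norm_num)
  have hq0 : (u^2 : ℂ) ≠ 0 := pow_ne_zero 2 hu
  have hE : Efun (u^2) (u^2) ≠ 0 := Efun_q_ne hq1 hq0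
  apply mul_left_cancel₀ hE
  rw [key_lemma u hu hu1 m e, key_lemma u hu hu1 (-e) (-m)]
  have h1 : (1 : ℤ) - (-e) = 1 + e := by ring
  have h2 : (1 : ℤ) + (-m) = 1 - m := by ring
  have h3 : (-((-m)*(-e)) : ℤ) = -(e*m) := by ring
  rw [h1, h2, h3, Sfun_comm hq1]
end
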